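/- Let n ≥ 2 be an integer, let f : ℝ → ℝ be continuously differentiable, and let u ∈ C²([0,1]) satisfy u''(r) + ((n-1)/r) u'(r) + f(u(r)) = 0 for 0 < r < 1. Then for any ψ ∈ C²([0,1]), the function v(r) = ψ(r) u'(r) satisfies, for 0 < r < 1, v''(r) + ((n-1)/r) v'(r) + f'(u(r)) v(r) = −2 ψ'(r) f(u(r)) + u'(r) L[ψ](r) / r², where L[ψ](r) = r² ψ''(r) − (n−1) r ψ'(r) + (n−1) ψ(r). -/

import Mathlib

open Set Real

/-- The linearization lemma for the Laplacian (the `p = 2` case):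
if `u'' + ((n-1)/r)u' + f(u) = 0` on `(0,1)`, then `v = ψ u'`
(with `v' = ψ' u' + ψ u''`) satisfies
`v'' + ((n-1)/r)v' + f'(u)v = -2 ψ' f(u) + u' L[ψ]/r²` on `(0,1)`,
where `L[ψ] = r²ψ'' - (n-1) r ψ' + (n-1) ψ`. -/
theorem laplace_linearization
    (n : ℕ) (hn : 2 ≤ n)
    (f : ℝ → ℝ) (hf : ContDiff ℝ 1 f)
    (u u' u'' : ℝ → ℝ)
    (hu : ∀ r ∈ Icc (0:ℝ) 1, HasDerivAt u (u' r) r)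
    (hu' : ∀ r ∈ Icc (0:ℝ) 1, HasDerivAt u' (u'' r) r)
    (hu''c : ContinuousOn u'' (Icc (0:ℝ) 1))
    (ψ ψ' ψ'' : ℝ → ℝ)
    (hψ : ∀ r ∈ Icc (0:ℝ) 1, HasDerivAt ψ (ψ' r) r)
    (hψ' : ∀ r ∈ Icc (0:ℝ) 1, HasDerivAt ψ' (ψ'' r) r)
    (hψ''c : ContinuousOn ψ'' (Icc (0:ℝ) 1))
    (hode : ∀ r ∈ Ioo (0:ℝ) 1,
      u'' r + ((n : ℝ) - 1) / r * u' r + f (u r) = 0) :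
    ∀ r ∈ Ioo (0:ℝ) 1,
      deriv (fun s => ψ' s * u' s + ψ s * u'' s) r
          + ((n : ℝ) - 1) / r * (ψ' r * u' r + ψ r * u'' r)
          + deriv f (u r) * (ψ r * u' r)
        = -2 * ψ' r * f (u r)
          + u' r * (r ^ 2 * ψ'' r - ((n : ℝ) - 1) * r * ψ' r
              + ((n : ℝ) - 1) * ψ r) / r ^ 2 := by
  intro r hr
  have hrIcc : r ∈ Icc (0:ℝ) 1 := ⟨hr.1.le, hr.2.le⟩
  have hr0 : r ≠ 0 := ne_of_gt hr.1
  -- f is differentiable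
  have hfd : ∀ x : ℝ, HasDerivAt f (deriv f x) x := fun x =>
    (hf.differentiable one_ne_zero x).hasDerivAt
  -- u'' agrees with g on Ioo 0 1
  set g : ℝ → ℝ := fun s => -(((n : ℝ) - 1) / s * u' s) - f (u s) with hg
  have heq : ∀ s ∈ Ioo (0:ℝ) 1, u'' s = g s := by
    intro s hs
    have := hode s hs
    simp only [hg]
    linarith
  -- derivative of g at r
  have hinv : HasDerivAt (fun s : ℝ => ((n : ℝ) - 1) / s)
      (-(((n : ℝ) - 1) / r ^ 2)) r := by
    have := (hasDerivAt_inv hr0).const_mul ((n : ℝ) - 1)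
    rw [show (fun s : ℝ => ((n : ℝ) - 1) / s) = fun y => ((n : ℝ) - 1) * y⁻¹ by funext s; ring,
      show -(((n : ℝ) - 1) / r ^ 2) = ((n : ℝ) - 1) * -(r ^ 2)⁻¹ by ring]
    exact this
  have hgd : HasDerivAt g
      (-((-(((n : ℝ) - 1) / r ^ 2)) * u' r + ((n : ℝ) - 1) / r * u'' r)
        - deriv f (u r) * u' r) r := by
    exact ((hinv.mul (hu' r hrIcc)).neg).sub ((hfd (u r)).comp r (hu r hrIcc))
  -- u'' has this derivative at r too
  have hu''d : HasDerivAt u''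
      (-((-(((n : ℝ) - 1) / r ^ 2)) * u' r + ((n : ℝ) - 1) / r * u'' r)
        - deriv f (u r) * u' r) r := by
    apply hgd.congr_of_eventuallyEq
    filter_upwards [isOpen_Ioo.mem_nhds hr] with s hs using heq s hs
  -- the derivative of ψ' u' + ψ u''
  have hD : HasDerivAt (fun s => ψ' s * u' s + ψ s * u'' s)
      ((ψ'' r * u' r + ψ' r * u'' r) +
        (ψ' r * u'' r + ψ r *
          (-((-(((n : ℝ) - 1) / r ^ 2)) * u' r + ((n : ℝ) - 1) / r * u'' r)
            - deriv f (u r) * u' r))) r :=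
    ((hψ' r hrIcc).mul (hu' r hrIcc)).add ((hψ r hrIcc).mul hu''d)
  rw [hD.deriv]
  have hode' : u'' r = -(((n : ℝ) - 1) / r * u' r) - f (u r) := by
    have := hode r hr; linarith
  rw [hode']
  field_simp
  ring
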